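/- Let A, B, C ∈ ℝ, λ ≥ 0, a ∈ ℝ, p* ≥ 0. Let V, E, V*, E* : [0,∞) → ℝ be differentiable functions satisfying the ODEs: V' = (A+B)V + C; (V*)' = (A+B)V* + C; E' = 2(A·E + B·V² + C·V) + λa²(V − E); (E*)' = 2(A·E* + B·(V*)² + C·V*) + λa²(V* − E*) + 2p*((V*)² − E*). Assume E*(τ) ≥ (V*(τ))² for all τ ≥ 0, and assume the matching initial conditions V*(0) = V(0) and E*(0) = E(0). Then for all τ ≥ 0: V*(τ) = V(τ) and E*(τ) − (V*(τ))² ≤ E(τ) − V(τ)². -/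

import Mathlib

/-- Grönwall-type helper: if `g' ≤ K g` on `[0,∞)` and `g 0 ≤ 0`, then `g ≤ 0` on `[0,∞)`. -/
lemma gronwall_nonpos (K : ℝ) (g g' : ℝ → ℝ)
    (hg : ∀ τ ≥ (0:ℝ), HasDerivAt g (g' τ) τ)
    (hle : ∀ τ ≥ (0:ℝ), g' τ ≤ K * g τ) (h0 : g 0 ≤ 0) :
    ∀ τ ≥ (0:ℝ), g τ ≤ 0 := by
  set h : ℝ → ℝ := fun t => g t * Real.exp (-K * t) with hh
  have hderiv : ∀ t ≥ (0:ℝ), HasDerivAt h ((g' t - K * g t) * Real.exp (-K * t)) t := by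
    intro t ht
    have h1 : HasDerivAt (fun t : ℝ => Real.exp (-K * t)) (Real.exp (-K * t) * (-K)) t := by
      have := (((hasDerivAt_id t).const_mul (-K)).exp)
      simpa [mul_comm] using this
    have := (hg t ht).mul h1
    refine this.congr_deriv ?_
    ring
  have hanti : AntitoneOn h (Set.Ici (0:ℝ)) := by
    apply antitoneOn_of_deriv_nonpos (convex_Ici 0)
    · intro t ht
      exact ((hderiv t ht).continuousAt).continuousWithinAt
    · intro t ht
      rw [interior_Ici] at ht
      exact ((hderiv t (le_of_lt ht)).differentiableAt).differentiableWithinAt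
    · intro t ht
      rw [interior_Ici] at ht
      have ht' : (0:ℝ) ≤ t := le_of_lt ht
      rw [(hderiv t ht').deriv]
      have := hle t ht'
      have hexp : (0:ℝ) < Real.exp (-K * t) := Real.exp_pos _
      nlinarith
  intro τ hτ
  have := hanti (Set.self_mem_Ici) hτ hτ
  have h0' : h 0 ≤ 0 := by
    simpa [hh] using h0
  have hτle : h τ ≤ 0 := le_trans this h0'
  have hexp : (0:ℝ) < Real.exp (-K * τ) := Real.exp_pos _
  by_contra hc
  push_neg at hc
  have : 0 < h τ := by positivity
  linarith

/-- Theorem (binary variance control): the control leaves the mean speed unchanged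
and does not increase the speed variance. -/
theorem binary_variance_control
    (A B C lam a pstar : ℝ) (hlam : 0 ≤ lam) (hp : 0 ≤ pstar)
    (V E Vs Es : ℝ → ℝ)
    (hV : ∀ τ ≥ (0:ℝ), HasDerivAt V ((A + B) * V τ + C) τ)
    (hVs : ∀ τ ≥ (0:ℝ), HasDerivAt Vs ((A + B) * Vs τ + C) τ)
    (hE : ∀ τ ≥ (0:ℝ),
      HasDerivAt E (2 * (A * E τ + B * (V τ) ^ 2 + C * V τ) + lam * a ^ 2 * (V τ - E τ)) τ)
    (hEs : ∀ τ ≥ (0:ℝ),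
      HasDerivAt Es (2 * (A * Es τ + B * (Vs τ) ^ 2 + C * Vs τ) + lam * a ^ 2 * (Vs τ - Es τ)
        + 2 * pstar * ((Vs τ) ^ 2 - Es τ)) τ)
    (hvar : ∀ τ ≥ (0:ℝ), (Vs τ) ^ 2 ≤ Es τ)
    (hV0 : Vs 0 = V 0) (hE0 : Es 0 = E 0) :
    ∀ τ ≥ (0:ℝ), Vs τ = V τ ∧ Es τ - (Vs τ) ^ 2 ≤ E τ - (V τ) ^ 2 := by
  -- Step 1: Vs = V on [0,∞)
  have hVeq : ∀ τ ≥ (0:ℝ), Vs τ = V τ := by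
    have hd : ∀ τ ≥ (0:ℝ), HasDerivAt (fun t => Vs t - V t)
        ((A + B) * (Vs τ - V τ)) τ := by
      intro τ hτ
      have := (hVs τ hτ).sub (hV τ hτ)
      refine this.congr_deriv ?_; ring
    have h1 := gronwall_nonpos (A + B) (fun t => Vs t - V t)
      (fun t => (A + B) * (Vs t - V t)) hd (fun τ hτ => le_refl _)
      (by simp [hV0])
    have hd2 : ∀ τ ≥ (0:ℝ), HasDerivAt (fun t => V t - Vs t)
        ((A + B) * (V τ - Vs τ)) τ := by
      intro τ hτ
      have := (hV τ hτ).sub (hVs τ hτ)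
      refine this.congr_deriv ?_; ring
    have h2 := gronwall_nonpos (A + B) (fun t => V t - Vs t)
      (fun t => (A + B) * (V t - Vs t)) hd2 (fun τ hτ => le_refl _)
      (by simp [hV0])
    intro τ hτ
    have u1 : Vs τ - V τ ≤ 0 := h1 τ hτ
    have u2 : V τ - Vs τ ≤ 0 := h2 τ hτ
    linarith
  -- Step 2: Es ≤ E on [0,∞)
  have hEle : ∀ τ ≥ (0:ℝ), Es τ - E τ ≤ 0 := by
    apply gronwall_nonpos (2 * A - lam * a ^ 2) (fun t => Es t - E t)
      (fun t => (2 * (A * Es t + B * (Vs t) ^ 2 + C * Vs t) + lam * a ^ 2 * (Vs t - Es t)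
        + 2 * pstar * ((Vs t) ^ 2 - Es t))
        - (2 * (A * E t + B * (V t) ^ 2 + C * V t) + lam * a ^ 2 * (V t - E t)))
    · intro τ hτ
      exact (hEs τ hτ).sub (hE τ hτ)
    · intro τ hτ
      have hveq := hVeq τ hτ
      have hv := hvar τ hτ
      rw [hveq] at hv ⊢
      nlinarith [mul_nonneg hp (sub_nonneg.mpr hv)]
    · simp [hE0]
  intro τ hτ
  have hveq := hVeq τ hτ
  refine ⟨hveq, ?_⟩
  have u3 : Es τ - E τ ≤ 0 := hEle τ hτ
  rw [hveq]
  linarith
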